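/- For a regular cardinal κ > ℵ₁, GRP^{<ω₁}(<κ) implies Rado's Conjecture RC(<κ): for every tree T that is not special, there is a subset B of T of cardinality < κ such that the induced subtree on B is not special. -/

import Mathlib

open Cardinal

namespace GameRefl

/-- A position in a game with moves from `A`: a transfinite sequence of elements of
`A` of some ordinal length `η`. -/
def Pos (A : Type) : Type 1 := Σ η : Ordinal.{0}, (Set.Iio η → A)

/-- The initial segment of length `η` of the total play `f` (where `f ξ` is the
`ξ`-th move of the match, moves of player I sitting at even, those of player II at
odd indices). -/
def seg {A : Type} (f : Ordinal → A) (η : Ordinal) : Pos A :=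
  ⟨η, fun ξ => f ξ.1⟩

/-- Player II wins the match `f` of the game `𝒢^{A^{<μ}}(𝒜)` of length `μ`:
either at some stage `η < μ` the current position lies in `𝒜` but player I's next
move leads out of `𝒜`, or every initial segment of the full play of length `μ` lies
in `𝒜`. -/
def WinIIlt (A : Type) (μ : Ordinal) (𝒜 : Set (Pos A)) (f : Ordinal → A) : Prop :=
  (∃ η < μ, seg f (2 * η) ∈ 𝒜 ∧ seg f (2 * η + 1) ∉ 𝒜) ∨
    (∀ η < μ, seg f (2 * η) ∈ 𝒜)

/-- Player II wins the match `f` of the game `𝒢^{A^{≤δ}}(𝒜)` of fixed length `δ`: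
either at some stage `η < δ` the position is in `𝒜` but player I's next move leads
out of `𝒜`, or every initial segment (of length `≤ δ`) of the play lies in `𝒜`. -/
def WinIIle (A : Type) (δ : Ordinal) (𝒜 : Set (Pos A)) (f : Ordinal → A) : Prop :=
  (∃ η < δ, seg f (2 * η) ∈ 𝒜 ∧ seg f (2 * η + 1) ∉ 𝒜) ∨
    (∀ η ≤ δ, seg f (2 * η) ∈ 𝒜)

/-- Player II has a winning strategy in the game of length `μ` with payoff `𝒜`,
played with moves from the subset `B` of `A`.  A strategy is a function `τ` from
positions to moves (used at the odd stages); it must stay inside `B`, and every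
match played inside `B` in which player II follows `τ` is won by player II. -/
def IIHasWinLt (A : Type) (B : Set A) (μ : Ordinal) (𝒜 : Set (Pos A)) : Prop :=
  ∃ τ : Pos A → A,
    (∀ p : Pos A, (∀ i, p.2 i ∈ B) → τ p ∈ B) ∧
    ∀ f : Ordinal → A, (∀ ξ, f ξ ∈ B) →
      (∀ ξ < μ, f (2 * ξ + 1) = τ (seg f (2 * ξ + 1))) → WinIIlt A μ 𝒜 f

/-- Player II has a winning strategy in the game of fixed length `δ` with payoff
`𝒜`, played with moves from the subset `B` of `A`. -/
def IIHasWinLe (A : Type) (B : Set A) (δ : Ordinal) (𝒜 : Set (Pos A)) : Prop :=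
  ∃ τ : Pos A → A,
    (∀ p : Pos A, (∀ i, p.2 i ∈ B) → τ p ∈ B) ∧
    ∀ f : Ordinal → A, (∀ ξ, f ξ ∈ B) →
      (∀ ξ < δ, f (2 * ξ + 1) = τ (seg f (2 * ξ + 1))) → WinIIle A δ 𝒜 f

/-- `𝒞` is a `μ`-club subset of `[A]^{<κ}` : all members have size `<κ`, `𝒞` is
cofinal in `[A]^{<κ}` with respect to `⊆`, and `𝒞` is closed under unions of
`⊆`-increasing chains of length `ν` for every regular `μ ≤ ν < κ`. -/
def MuClub {A : Type} (μ κ : Cardinal) (𝒞 : Set (Set A)) : Prop :=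
  (∀ B ∈ 𝒞, Cardinal.mk ↥B < κ) ∧
  (∀ x : Set A, Cardinal.mk ↥x < κ → ∃ B ∈ 𝒞, x ⊆ B) ∧
  (∀ ν : Cardinal, ν.IsRegular → μ ≤ ν → ν < κ →
    ∀ c : Ordinal → Set A,
      (∀ i j, i ≤ j → j < ν.ord → c i ⊆ c j) →
      (∀ i < ν.ord, c i ∈ 𝒞) → (⋃ i ∈ Set.Iio ν.ord, c i) ∈ 𝒞)

/-- The restriction `𝒜 ∩ B^{<∞}` of a payoff set to sequences with entries in `B`. -/
def restrictPayoff {A : Type} (𝒜 : Set (Pos A)) (B : Set A) : Set (Pos A) :=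
  {p ∈ 𝒜 | ∀ i, p.2 i ∈ B}

/-- The Game Reflection Principle `GRP^{<μ}(<κ)`: for every set `A` of regular
cardinality `≥ κ`, every `μ`-club `𝒞 ⊆ [A]^{<κ}` and every `𝒜 ⊆ A^{<μ}`, if
player II has no winning strategy in `𝒢^{A^{<μ}}(𝒜)`, then there is `B ∈ 𝒞` such
that player II has no winning strategy in `𝒢^{B^{<μ}}(𝒜 ∩ B^{<μ})`. -/
def GRPlt (μ κ : Cardinal) : Prop :=
  ∀ A : Type, (Cardinal.mk A).IsRegular → κ ≤ Cardinal.mk A →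
    ∀ 𝒞 : Set (Set A), MuClub μ κ 𝒞 →
      ∀ 𝒜 : Set (Pos A),
        ¬ IIHasWinLt A Set.univ μ.ord 𝒜 →
          ∃ B ∈ 𝒞, ¬ IIHasWinLt A B μ.ord (restrictPayoff 𝒜 B)

/-- The Game Reflection Principle `GRP^{δ,μ}(<κ)` for games of fixed length `δ`,
reflecting to members of `μ`-clubs `𝒞 ⊆ [A]^{<κ}`. -/
def GRPfix (δ : Ordinal) (μ κ : Cardinal) : Prop :=
  ∀ A : Type, (Cardinal.mk A).IsRegular → κ ≤ Cardinal.mk A →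
    ∀ 𝒞 : Set (Set A), MuClub μ κ 𝒞 →
      ∀ 𝒜 : Set (Pos A),
        ¬ IIHasWinLe A Set.univ δ 𝒜 →
          ∃ B ∈ 𝒞, ¬ IIHasWinLe A B δ (restrictPayoff 𝒜 B)

end GameRefl

/-- A partial order is a (set-theoretic) tree if the set of predecessors of any
element is well-ordered by the order. -/
def IsSetTheoreticTree (T : Type) [PartialOrder T] : Prop :=
  ∀ t : T, IsWellOrder {s : T // s < t} (fun a b => a.1 < b.1)

/-- A tree (as a partial order) is special if it is the union of countably many
antichains, i.e. there is a countable colouring such that no two comparable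
distinct elements get the same colour. -/
def IsSpecialTree (T : Type) [PartialOrder T] : Prop :=
  ∃ f : T → ℕ, ∀ s t : T, f s = f t → ¬ s < t

/-- Rado's Conjecture with reflection cardinal `<κ`: every non-special tree has a
non-special subtree of cardinality `<κ`. -/
def RadoConjecture (κ : Cardinal) : Prop :=
  ∀ (T : Type) (_ : PartialOrder T), IsSetTheoreticTree T → ¬ IsSpecialTree T →
    ∃ B : Set T, Cardinal.mk ↥B < κ ∧ ¬ IsSpecialTree ↥B

namespace RadoAux
open GameRefl
open scoped Classical

lemma two_ne_zero' : (2 : Ordinal) ≠ 0 := by norm_num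

lemma even_mod (a : Ordinal) : 2 * a % 2 = 0 := by
  have := Ordinal.mul_add_mod_self 2 a 0
  simpa using this

lemma odd_mod (a : Ordinal) : (2 * a + 1) % 2 = 1 := by
  rw [Ordinal.mul_add_mod_self]
  exact Ordinal.mod_eq_of_lt one_lt_two

lemma even_ne_odd (a b : Ordinal) : 2 * a ≠ 2 * b + 1 := by
  intro h
  have := congrArg (· % 2) h
  simp only [even_mod, odd_mod] at this
  exact zero_ne_one this

lemma even_div (a : Ordinal) : 2 * a / 2 = a := Ordinal.mul_div_cancel a two_ne_zero'

lemma odd_div (a : Ordinal) : (2 * a + 1) / 2 = a := by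
  rw [Ordinal.mul_add_div a two_ne_zero', Ordinal.div_eq_zero_of_lt one_lt_two, add_zero]

lemma odd_inj {a b : Ordinal} (h : 2 * a + 1 = 2 * b + 1) : a = b := by
  have h2 := congrArg (· / 2) h
  change (2 * a + 1) / 2 = (2 * b + 1) / 2 at h2
  rwa [odd_div, odd_div] at h2

lemma even_or_odd (ξ : Ordinal) : (∃ a, ξ = 2 * a) ∨ (∃ a, ξ = 2 * a + 1) := by
  have hm : ξ % 2 < 2 := Ordinal.mod_lt ξ two_ne_zero'
  have hd := Ordinal.div_add_mod ξ 2
  have hm' : ξ % 2 ≤ 1 := by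
    by_contra hgt
    push_neg at hgt
    have h1 : Order.succ (1 : Ordinal) ≤ ξ % 2 := Order.succ_le_iff.2 hgt
    rw [Ordinal.succ_one] at h1
    exact absurd hm (not_lt.2 h1)
  rcases lt_or_eq_of_le hm' with h | h
  · left
    rw [Ordinal.lt_one_iff_zero] at h
    exact ⟨ξ / 2, by conv_lhs => rw [← hd, h, add_zero]⟩
  · right
    exact ⟨ξ / 2, by conv_lhs => rw [← hd, h]⟩


/-- The play in which player I's moves are given by `mov` and player II follows `τ`. -/
noncomputable def matchPlay (A : Type) (τ : Pos A → A) (mov : Ordinal → A) (ξ : Ordinal) : A :=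
  if ξ % 2 = 1 then τ ⟨ξ, fun ζ => matchPlay A τ mov ζ.1⟩ else mov (ξ / 2)
termination_by ξ
decreasing_by exact ζ.2

lemma matchPlay_odd (A : Type) (τ : Pos A → A) (mov : Ordinal → A) (a : Ordinal) :
    matchPlay A τ mov (2 * a + 1) = τ (seg (matchPlay A τ mov) (2 * a + 1)) := by
  rw [matchPlay, if_pos (odd_mod a)]
  rfl

lemma matchPlay_even (A : Type) (τ : Pos A → A) (mov : Ordinal → A) (a : Ordinal) :
    matchPlay A τ mov (2 * a) = mov a := by
  rw [matchPlay, if_neg (by simp [even_mod]), even_div]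

lemma matchPlay_agree (A : Type) (τ : Pos A → A) (mov₁ mov₂ : Ordinal → A) (β : Ordinal)
    (h : ∀ a, 2 * a < β → mov₁ a = mov₂ a) :
    ∀ ξ < β, matchPlay A τ mov₁ ξ = matchPlay A τ mov₂ ξ := by
  intro ξ
  induction ξ using Ordinal.induction with
  | h ξ IH =>
    intro hξ
    rw [matchPlay, matchPlay]
    by_cases hpar : ξ % 2 = 1
    · simp only [hpar, if_pos]
      congr 1
      exact congrArg (Sigma.mk ξ) (funext fun ζ => IH ζ.1 ζ.2 (ζ.2.trans hξ))
    · simp only [hpar, if_neg, if_false]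
      exact h _ (lt_of_le_of_lt (Ordinal.mul_div_le ξ 2) hξ)

section Tree

variable {T : Type} [PartialOrder T]

/-- The rank of a node: the order type of its set of predecessors. -/
noncomputable def rnk (hT : IsSetTheoreticTree T) (t : T) : Ordinal :=
  @Ordinal.type {s : T // s < t} (fun a b => a.1 < b.1) (hT t)

lemma rnk_lt_rnk (hT : IsSetTheoreticTree T) {s t : T} (h : s < t) :
    rnk hT s < rnk hT t := by
  letI i1 : IsWellOrder {x : T // x < s} (fun a b => a.1 < b.1) := hT s
  letI i2 : IsWellOrder {x : T // x < t} (fun a b => a.1 < b.1) := hT t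
  refine PrincipalSeg.ordinal_type_lt
    ⟨⟨⟨fun a => ⟨a.1, lt_trans a.2 h⟩, fun a b hab => Subtype.ext (by
        simpa using congrArg Subtype.val hab)⟩, Iff.rfl⟩, ⟨s, h⟩, fun b => ?_⟩
  constructor
  · rintro ⟨a, rfl⟩
    exact a.2
  · intro hb
    exact ⟨⟨b.1, hb⟩, rfl⟩

lemma rnk_inj (hT : IsSetTheoreticTree T) {x y t : T} (hx : x ≤ t) (hy : y ≤ t)
    (h : rnk hT x = rnk hT y) : x = y := by
  rcases hx.lt_or_eq with hx' | rfl
  · rcases hy.lt_or_eq with hy' | rfl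
    · letI i2 : IsWellOrder {s : T // s < t} (fun a b => a.1 < b.1) := hT t
      rcases trichotomous (r := fun a b : {s : T // s < t} => a.1 < b.1) ⟨x, hx'⟩ ⟨y, hy'⟩
        with h' | h' | h'
      · exact absurd h (ne_of_lt (rnk_lt_rnk hT h'))
      · simpa using congrArg Subtype.val h'
      · exact absurd h.symm (ne_of_lt (rnk_lt_rnk hT h'))
    · exact absurd h (ne_of_lt (rnk_lt_rnk hT hx'))
  · rcases hy.lt_or_eq with hy' | rfl
    · exact absurd h.symm (ne_of_lt (rnk_lt_rnk hT hy'))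
    · rfl

lemma rnk_card (hT : IsSetTheoreticTree T) (t : T) :
    (rnk hT t).card = #{s : T // s < t} := by
  letI := hT t
  exact Ordinal.card_type _

variable {A : Type}

/-- Player I's canonical sequence of moves attacking node `t`: at stage `a` the
predecessor of `t` of rank `a` (if one exists), and a default node otherwise. -/
noncomputable def mov (hT : IsSetTheoreticTree T) (iT : T → A) (d₀ t : T) (a : Ordinal) : A :=
  iT (if h : ∃ x, x ≤ t ∧ rnk hT x = a then h.choose else d₀)

lemma mov_at (hT : IsSetTheoreticTree T) (iT : T → A) (d₀ : T) {t x : T} (hx : x ≤ t) :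
    mov hT iT d₀ t (rnk hT x) = iT x := by
  have hex : ∃ y, y ≤ t ∧ rnk hT y = rnk hT x := ⟨x, hx, rfl⟩
  rw [mov, dif_pos hex]
  exact congrArg iT (rnk_inj hT hex.choose_spec.1 hx hex.choose_spec.2)

lemma mov_agree (hT : IsSetTheoreticTree T) (iT : T → A) (d₀ : T) {s t : T} (hst : s < t)
    {a : Ordinal} (ha : a ≤ rnk hT s) :
    mov hT iT d₀ t a = mov hT iT d₀ s a := by
  by_cases h1 : ∃ x, x ≤ s ∧ rnk hT x = a
  · have h2 : ∃ x, x ≤ t ∧ rnk hT x = a := ⟨h1.choose, h1.choose_spec.1.trans hst.le, h1.choose_spec.2⟩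
    rw [mov, mov, dif_pos h1, dif_pos h2]
    exact congrArg iT (rnk_inj hT h2.choose_spec.1 (h1.choose_spec.1.trans hst.le)
      (h2.choose_spec.2.trans h1.choose_spec.2.symm))
  · have ha' : a < rnk hT s := by
      rcases ha.lt_or_eq with h | rfl
      · exact h
      · exact absurd ⟨s, le_rfl, rfl⟩ h1
    have h2 : ¬ ∃ x, x ≤ t ∧ rnk hT x = a := by
      rintro ⟨y, hy, hya⟩
      rcases hy.lt_or_eq with hy' | rfl
      · letI i2 : IsWellOrder {u : T // u < t} (fun a b => a.1 < b.1) := hT t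
        rcases trichotomous (r := fun a b : {u : T // u < t} => a.1 < b.1) ⟨y, hy'⟩ ⟨s, hst⟩
          with h' | h' | h'
        · exact h1 ⟨y, le_of_lt h', hya⟩
        · have : y = s := by simpa using congrArg Subtype.val h'
          exact h1 ⟨y, this.le, hya⟩
        · exact absurd (hya ▸ rnk_lt_rnk hT h' : rnk hT s < a) (not_lt.2 ha'.le)
      · exact absurd (hya ▸ rnk_lt_rnk hT hst : rnk hT s < a) (not_lt.2 ha'.le)
    rw [mov, mov, dif_neg h1, dif_neg h2]

end Tree

section Game

variable (T : Type) [PartialOrder T] (κ : Cardinal.{0})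

/-- The padded move set for the specializing game on `T`. -/
def AT : Type := T ⊕ (ℕ ⊕ (Order.succ (#T + κ)).ord.ToType)

/-- Tree moves. -/
def iT : T → AT T κ := Sum.inl

/-- Colour moves. -/
def iN : ℕ → AT T κ := fun n => Sum.inr (Sum.inl n)

lemma iN_inj : Function.Injective (iN T κ) := by
  intro a b hab
  have h : (Sum.inr (Sum.inl a) : T ⊕ (ℕ ⊕ (Order.succ (#T + κ)).ord.ToType)) =
      Sum.inr (Sum.inl b) := hab
  exact Sum.inl.inj (Sum.inr.inj h)

lemma lt_odd (a : Ordinal) : 2 * a < 2 * a + 1 := by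
  rw [Ordinal.add_one_eq_succ]
  exact Order.lt_succ _

lemma mk_AT (hκ0 : ℵ₀ ≤ κ) : #(AT T κ) = Order.succ (#T + κ) := by
  have hc0 : ℵ₀ ≤ #T + κ := le_trans hκ0 (self_le_add_left κ (#T))
  have hcinf : ℵ₀ ≤ Order.succ (#T + κ) := hc0.trans (Order.le_succ _)
  have h1 : #(AT T κ) = #T + (ℵ₀ + Order.succ (#T + κ)) := by
    simp [AT, Cardinal.mk_sum, Cardinal.lift_id, Cardinal.mk_toType, Cardinal.card_ord,
      Cardinal.mk_nat]
  rw [h1]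
  apply le_antisymm
  · exact Cardinal.add_le_of_le hcinf
      (le_trans (self_le_add_right (#T) κ) (Order.le_succ _))
      (Cardinal.add_le_of_le hcinf hcinf le_rfl)
  · exact le_trans (self_le_add_left _ ℵ₀) (self_le_add_left _ (#T))

/-- The payoff set: all moves of player II so far are colours, and comparable tree
moves of player I have received distinct colours. -/
def payoff : Set (Pos (AT T κ)) :=
  {p | (∀ (i : Set.Iio p.1) (a : Ordinal), i.1 = 2 * a + 1 → ∃ n : ℕ, p.2 i = iN T κ n) ∧
    (∀ (i j k l : Set.Iio p.1) (a b : Ordinal) (s u : T),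
      i.1 = 2 * a → j.1 = 2 * a + 1 → k.1 = 2 * b → l.1 = 2 * b + 1 →
      p.2 i = iT T κ s → p.2 k = iT T κ u → s < u → p.2 j ≠ p.2 l)}

lemma seg_mem_payoff (f : Ordinal → AT T κ) (η : Ordinal) :
    seg f η ∈ payoff T κ ↔
      ((∀ a : Ordinal, 2 * a + 1 < η → ∃ n : ℕ, f (2 * a + 1) = iN T κ n) ∧
        (∀ (a b : Ordinal) (s u : T), 2 * a + 1 < η → 2 * b + 1 < η →
          f (2 * a) = iT T κ s → f (2 * b) = iT T κ u → s < u →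
          f (2 * a + 1) ≠ f (2 * b + 1))) := by
  constructor
  · rintro ⟨h1, h2⟩
    refine ⟨fun a ha => h1 ⟨2 * a + 1, ha⟩ a rfl,
      fun a b s u ha hb hs hu hsu => h2 ⟨2 * a, (lt_odd a).trans ha⟩ ⟨2 * a + 1, ha⟩
        ⟨2 * b, (lt_odd b).trans hb⟩ ⟨2 * b + 1, hb⟩ a b s u rfl rfl rfl rfl hs hu hsu⟩
  · rintro ⟨h1, h2⟩
    constructor
    · rintro ⟨iv, hiv⟩ a hia
      subst hia
      exact h1 a hiv
    · rintro ⟨iv, hi⟩ ⟨jv, hj⟩ ⟨kv, hk⟩ ⟨lv, hl⟩ a b s u hia hja hka hla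
      subst hia; subst hja; subst hka; subst hla
      exact h2 a b s u hj hl

lemma payoff_step (f : Ordinal → AT T κ) (η : Ordinal)
    (hg : seg f (2 * η) ∈ payoff T κ) : seg f (2 * η + 1) ∈ payoff T κ := by
  rw [seg_mem_payoff] at hg ⊢
  have key : ∀ x : Ordinal, 2 * x + 1 < 2 * η + 1 → 2 * x + 1 < 2 * η := by
    intro x hx
    rw [Ordinal.add_one_eq_succ (2 * η), Order.lt_succ_iff] at hx
    exact hx.lt_of_ne fun heq => even_ne_odd η x heq.symm
  exact ⟨fun a ha => hg.1 a (key a ha),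
    fun a b s u ha hb => hg.2 a b s u (key a ha) (key b hb)⟩

/-- The `ω₁`-club of small subsets of the move set containing all colours. -/
def club : Set (Set (AT T κ)) := {B | #↥B < κ ∧ ∀ n : ℕ, iN T κ n ∈ B}

lemma muClub_club (hκ : κ.IsRegular) (hκ1 : Cardinal.aleph 1 < κ) :
    MuClub (Cardinal.aleph 1) κ (club T κ) := by
  have hNκ : (#ℕ : Cardinal) < κ := by
    rw [Cardinal.mk_nat]
    exact Cardinal.aleph0_lt_aleph_one.trans hκ1
  refine ⟨fun B hB => hB.1, ?_, ?_⟩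
  · intro x hx
    refine ⟨x ∪ Set.range (iN T κ), ⟨?_, fun n => Or.inr ⟨n, rfl⟩⟩, Set.subset_union_left⟩
    exact lt_of_le_of_lt (Cardinal.mk_union_le x _)
      (Cardinal.add_lt_of_lt hκ.aleph0_le hx
        (lt_of_le_of_lt Cardinal.mk_range_le hNκ))
  · intro ν hν hν1 hνκ c hmono hel
    have h0 : (0 : Ordinal) < ν.ord := by
      rw [Cardinal.lt_ord, Ordinal.card_zero]
      exact (Cardinal.aleph_pos 1).trans_le hν1
    refine ⟨?_, fun n => Set.mem_biUnion h0 ((hel 0 h0).2 n)⟩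
    haveI : IsWellOrder ν.ord.ToType (· < ·) := isWellOrder_lt
    have hre : (⋃ i ∈ Set.Iio ν.ord, c i) =
        ⋃ x : ν.ord.ToType, c (Ordinal.typein (α := ν.ord.ToType) (· < ·) x) := by
      ext a
      simp only [Set.mem_iUnion, Set.mem_setOf_eq, exists_prop, Set.mem_Iio]
      constructor
      · rintro ⟨i, hi, hai⟩
        have hi' : i < Ordinal.type (α := ν.ord.ToType) (· < ·) := by
          rw [Ordinal.type_toType]; exact hi
        obtain ⟨x, hx⟩ := Ordinal.typein_surj (α := ν.ord.ToType) (· < ·) hi'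
        exact ⟨x, by rw [hx]; exact hai⟩
      · rintro ⟨x, hax⟩
        refine ⟨Ordinal.typein (α := ν.ord.ToType) (· < ·) x, ?_, hax⟩
        have hxlt := Ordinal.typein_lt_type (α := ν.ord.ToType) (· < ·) x
        rwa [Ordinal.type_toType] at hxlt
    rw [hre]
    have hν' : #ν.ord.ToType = ν := by rw [Cardinal.mk_toType, Cardinal.card_ord]
    refine lt_of_le_of_lt (Cardinal.mk_iUnion_le _) ?_
    have hν'' : #ν.ord.ToType < κ := by rw [hν']; exact hνκ
    refine Cardinal.mul_lt_of_lt hκ.aleph0_le hν'' ?_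
    refine Cardinal.iSup_lt_of_isRegular hκ hν'' ?_
    intro x
    refine (hel _ ?_).1
    have hxlt := Ordinal.typein_lt_type (α := ν.ord.ToType) (· < ·) x
    rwa [Ordinal.type_toType] at hxlt

lemma card_two_lt_aleph_one : (2 : Ordinal).card < Cardinal.aleph 1 := by
  have h2 : ((2 : Ordinal)).card = ((2 : ℕ) : Cardinal) := by
    rw [show ((2 : Ordinal)) = ((2 : ℕ) : Ordinal) by norm_cast, Ordinal.card_nat]
  rw [h2]
  exact lt_trans (Cardinal.nat_lt_aleph0 2) Cardinal.aleph0_lt_aleph_one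

lemma lt_omega1_two_mul {o : Ordinal} (h : o < (Cardinal.aleph 1).ord) :
    2 * o < (Cardinal.aleph 1).ord := by
  rw [Cardinal.lt_ord] at h ⊢
  rw [Ordinal.card_mul]
  exact Cardinal.mul_lt_of_lt (Cardinal.aleph0_le_aleph 1) card_two_lt_aleph_one h

lemma lt_omega1_add_one {o : Ordinal} (h : o < (Cardinal.aleph 1).ord) :
    o + 1 < (Cardinal.aleph 1).ord := by
  rw [Cardinal.lt_ord] at h ⊢
  rw [Ordinal.card_add, Ordinal.card_one]
  exact Cardinal.add_lt_of_lt (Cardinal.aleph0_le_aleph 1) h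
    (Cardinal.one_lt_aleph0.trans Cardinal.aleph0_lt_aleph_one)

lemma lt_omega1_of_odd_lt {a η : Ordinal} (ha : 2 * a + 1 < 2 * η)
    (hη : η < (Cardinal.aleph 1).ord) : a < (Cardinal.aleph 1).ord :=
  lt_of_le_of_lt (Ordinal.le_mul_right a (by norm_num))
    (lt_trans (lt_odd a) (lt_trans ha (lt_omega1_two_mul hη)))

lemma lt_succ_self (o : Ordinal) : o < o + 1 := by
  rw [Ordinal.add_one_eq_succ]
  exact Order.lt_succ _

lemma two_mul_succ (o : Ordinal) : 2 * (o + 1) = 2 * o + 1 + 1 := by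
  rw [mul_add, mul_one, add_assoc, one_add_one_eq_two]

/-- Player II has no winning strategy in the full specializing game if `T` is not
special (given that all its chains are countable). -/
lemma no_win_univ (hT : IsSetTheoreticTree T) (d₀ : T)
    (hsmall : ∀ t : T, #{s : T // s < t} ≤ ℵ₀) (hns : ¬ IsSpecialTree T) :
    ¬ IIHasWinLt (AT T κ) Set.univ (Cardinal.aleph 1).ord (payoff T κ) := by
  rintro ⟨τ, hτB, hτwin⟩
  have hgood : ∀ t : T, ∀ η < (Cardinal.aleph 1).ord,
      seg (matchPlay (AT T κ) τ (mov hT (iT T κ) d₀ t)) (2 * η) ∈ payoff T κ := by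
    intro t
    have hw := hτwin (matchPlay (AT T κ) τ (mov hT (iT T κ) d₀ t)) (fun _ => trivial)
      (fun ξ _ => matchPlay_odd (AT T κ) τ (mov hT (iT T κ) d₀ t) ξ)
    rcases hw with ⟨η, hη, hg1, hg2⟩ | h2
    · exact absurd (payoff_step T κ _ η hg1) hg2
    · exact h2
  have hrnkω : ∀ t : T, rnk hT t < (Cardinal.aleph 1).ord := by
    intro t
    rw [Cardinal.lt_ord, rnk_card]
    exact lt_of_le_of_lt (hsmall t) Cardinal.aleph0_lt_aleph_one
  have hboundt : ∀ t : T, 2 * rnk hT t + 1 < 2 * (rnk hT t + 1) := by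
    intro t
    rw [two_mul_succ]
    exact lt_succ_self _
  have hex : ∀ t : T, ∃ n : ℕ,
      matchPlay (AT T κ) τ (mov hT (iT T κ) d₀ t) (2 * rnk hT t + 1) = iN T κ n := by
    intro t
    have hg := (seg_mem_payoff T κ _ _).1
      (hgood t (rnk hT t + 1) (lt_omega1_add_one (hrnkω t)))
    exact hg.1 (rnk hT t) (hboundt t)
  refine hns ⟨fun t => (hex t).choose, ?_⟩
  intro s u hFsu hsu
  have hg := (seg_mem_payoff T κ _ _).1
    (hgood u (rnk hT u + 1) (lt_omega1_add_one (hrnkω u)))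
  have hbs : 2 * rnk hT s + 1 < 2 * (rnk hT u + 1) := by
    have h1 : 2 * rnk hT s < 2 * rnk hT u :=
      (mul_lt_mul_iff_right₀ (by norm_num : (0 : Ordinal) < 2)).2 (rnk_lt_rnk hT hsu)
    have h2 : 2 * rnk hT s + 1 ≤ 2 * rnk hT u := by
      rw [Ordinal.add_one_eq_succ]
      exact Order.succ_le_of_lt h1
    exact lt_of_le_of_lt h2 (lt_trans (lt_odd _) (hboundt u))
  have hagree : ∀ a : Ordinal, 2 * a < 2 * rnk hT s + 1 + 1 →
      mov hT (iT T κ) d₀ u a = mov hT (iT T κ) d₀ s a := by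
    intro a ha
    have ha2 : 2 * a < 2 * (rnk hT s + 1) := by rw [two_mul_succ]; exact ha
    have ha3 : a < rnk hT s + 1 :=
      (mul_lt_mul_iff_right₀ (by norm_num : (0 : Ordinal) < 2)).1 ha2
    have ha4 : a ≤ rnk hT s := by
      rw [Ordinal.add_one_eq_succ, Order.lt_succ_iff] at ha3
      exact ha3
    exact mov_agree hT (iT T κ) d₀ hsu ha4
  have hus : matchPlay (AT T κ) τ (mov hT (iT T κ) d₀ u) (2 * rnk hT s + 1) =
      matchPlay (AT T κ) τ (mov hT (iT T κ) d₀ s) (2 * rnk hT s + 1) :=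
    matchPlay_agree (AT T κ) τ _ _ _ hagree _ (lt_succ_self _)
  have hevs : matchPlay (AT T κ) τ (mov hT (iT T κ) d₀ u) (2 * rnk hT s) = iT T κ s := by
    rw [matchPlay_even]
    exact mov_at hT (iT T κ) d₀ hsu.le
  have hevu : matchPlay (AT T κ) τ (mov hT (iT T κ) d₀ u) (2 * rnk hT u) = iT T κ u := by
    rw [matchPlay_even]
    exact mov_at hT (iT T κ) d₀ le_rfl
  have hne := hg.2 (rnk hT s) (rnk hT u) s u hbs (hboundt u) hevs hevu hsu
  apply hne
  rw [hus, (hex s).choose_spec, (hex u).choose_spec]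
  exact congrArg (iN T κ) hFsu

/-- Player II's strategy in the reflected game, given a specializing function on
the small subtree. -/
noncomputable def strat (B : Set (AT T κ)) (fB : ↥(iT T κ ⁻¹' B) → ℕ) :
    Pos (AT T κ) → AT T κ := fun p =>
  iN T κ (if h : ∃ n : ℕ, ∃ (a : Ordinal) (ha : 2 * a < p.1) (u : T)
      (hu : u ∈ iT T κ ⁻¹' B), p.1 = 2 * a + 1 ∧ p.2 ⟨2 * a, ha⟩ = iT T κ u ∧ n = fB ⟨u, hu⟩
    then h.choose else 0)

lemma strat_val (B : Set (AT T κ)) (fB : ↥(iT T κ ⁻¹' B) → ℕ) (g : Ordinal → AT T κ)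
    (a : Ordinal) (u : T) (hu : u ∈ iT T κ ⁻¹' B) (hg : g (2 * a) = iT T κ u) :
    strat T κ B fB (seg g (2 * a + 1)) = iN T κ (fB ⟨u, hu⟩) := by
  have hQ : ∃ n : ℕ, ∃ (a' : Ordinal) (ha' : 2 * a' < (seg g (2 * a + 1)).1) (u' : T)
      (hu' : u' ∈ iT T κ ⁻¹' B), (seg g (2 * a + 1)).1 = 2 * a' + 1 ∧
      (seg g (2 * a + 1)).2 ⟨2 * a', ha'⟩ = iT T κ u' ∧ n = fB ⟨u', hu'⟩ :=
    ⟨fB ⟨u, hu⟩, a, lt_odd a, u, hu, rfl, hg, rfl⟩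
  rw [strat, dif_pos hQ]
  congr 1
  obtain ⟨a', ha', u', hu', h1, h2, h3⟩ := hQ.choose_spec
  have haa : a' = a := (odd_inj (h1 : 2 * a + 1 = 2 * a' + 1)).symm
  subst haa
  have h2' : g (2 * a') = iT T κ u' := h2
  have huu : u = u' := Sum.inl.inj (hg.symm.trans h2')
  subst huu
  exact h3

/-- If the small subtree carved out by `B` is special then player II wins the
reflected game. -/
lemma win_of_special (B : Set (AT T κ)) (hBN : ∀ n : ℕ, iN T κ n ∈ B)
    (hsp : IsSpecialTree ↥(iT T κ ⁻¹' B)) :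
    IIHasWinLt (AT T κ) B (Cardinal.aleph 1).ord (restrictPayoff (payoff T κ) B) := by
  obtain ⟨fB, hfB⟩ := hsp
  refine ⟨strat T κ B fB, fun p _ => hBN _, ?_⟩
  intro g hgB hfol
  right
  intro η hη
  refine ⟨?_, fun i => hgB _⟩
  rw [seg_mem_payoff]
  have hfol' : ∀ a : Ordinal, 2 * a + 1 < 2 * η →
      g (2 * a + 1) = strat T κ B fB (seg g (2 * a + 1)) := by
    intro a ha
    exact hfol a (lt_omega1_of_odd_lt ha hη)
  constructor
  · intro a ha
    rw [hfol' a ha]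
    exact ⟨_, rfl⟩
  · intro a b s u ha hb hs hu hsu
    have hsB : s ∈ iT T κ ⁻¹' B := by
      have := hgB (2 * a)
      rwa [hs] at this
    have huB : u ∈ iT T κ ⁻¹' B := by
      have := hgB (2 * b)
      rwa [hu] at this
    rw [hfol' a ha, hfol' b hb, strat_val T κ B fB g a s hsB hs,
      strat_val T κ B fB g b u huB hu]
    intro heq
    exact absurd hsu (hfB ⟨s, hsB⟩ ⟨u, huB⟩ (iN_inj T κ heq))

end Game

end RadoAux


open RadoAux in
open GameRefl in
/-- For a regular cardinal `κ > ℵ₁`, the Game Reflection Principle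
`GRP^{<ω₁}(<κ)` implies Rado's Conjecture `RC(<κ)`. -/
theorem GRP_implies_RadoConjecture (κ : Cardinal) (hκ : κ.IsRegular)
    (hκ1 : Cardinal.aleph 1 < κ) (h : GRPlt (Cardinal.aleph 1) κ) :
    RadoConjecture κ := by
  intro T instT hT hns
  letI := instT
  classical
  have hne : Nonempty T := by
    by_contra hc
    rw [not_nonempty_iff] at hc
    exact hns ⟨fun _ => 0, fun s => (hc.false s).elim⟩
  obtain ⟨d₀⟩ := hne
  by_cases hbig : ∃ t : T, ℵ₀ < #{s : T // s < t}
  · -- `T` has an uncountable chain, which is itself a non-special subtree of size `ℵ₁`.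
    obtain ⟨t, ht⟩ := hbig
    have h1 : Cardinal.aleph 1 ≤ #{s : T // s < t} := by
      rw [← Cardinal.succ_aleph0]
      exact Order.succ_le_of_lt ht
    obtain ⟨P, hP⟩ := Cardinal.le_mk_iff_exists_set.1 h1
    refine ⟨Subtype.val '' P, ?_, ?_⟩
    · rw [Cardinal.mk_image_eq Subtype.val_injective, hP]
      exact hκ1
    · rintro ⟨f, hf⟩
      have hlt : ∀ a : ↥(Subtype.val '' P), a.1 < t := by
        rintro ⟨av, hav⟩
        obtain ⟨x, _, hxa⟩ := hav
        exact hxa ▸ x.2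
      have hinj : Function.Injective f := by
        intro a b hab
        by_contra hne2
        letI := hT t
        rcases trichotomous (r := fun a b : {s : T // s < t} => a.1 < b.1)
          ⟨a.1, hlt a⟩ ⟨b.1, hlt b⟩ with h' | h' | h'
        · exact hf a b hab h'
        · exact hne2 (Subtype.ext (by simpa using congrArg Subtype.val h'))
        · exact hf b a hab.symm h'
      have hle : #↥(Subtype.val '' P) ≤ ℵ₀ := by
        have h2 := Cardinal.mk_le_of_injective hinj
        rwa [Cardinal.mk_nat] at h2
      rw [Cardinal.mk_image_eq Subtype.val_injective, hP] at hle
      exact absurd hle (not_le.2 Cardinal.aleph0_lt_aleph_one)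
  · -- all chains of `T` are countable: apply game reflection.
    push_neg at hbig
    have hAreg : (#(AT T κ)).IsRegular := by
      rw [mk_AT T κ hκ.aleph0_le]
      exact Cardinal.isRegular_succ (le_trans hκ.aleph0_le (self_le_add_left κ (#T)))
    have hκA : κ ≤ #(AT T κ) := by
      rw [mk_AT T κ hκ.aleph0_le]
      exact le_trans (self_le_add_left κ (#T)) (Order.le_succ _)
    obtain ⟨B, hB𝒞, hBnw⟩ := h (AT T κ) hAreg hκA (club T κ) (muClub_club T κ hκ hκ1)
      (payoff T κ) (no_win_univ T κ hT d₀ (fun t => hbig t) hns)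
    refine ⟨iT T κ ⁻¹' B, ?_, ?_⟩
    · refine lt_of_le_of_lt (Cardinal.mk_le_of_injective
        (f := fun x : ↥(iT T κ ⁻¹' B) => (⟨iT T κ x.1, x.2⟩ : ↥B)) ?_) hB𝒞.1
      intro a b hab
      exact Subtype.ext (Sum.inl.inj (congrArg Subtype.val hab))
    · intro hsp
      exact hBnw (win_of_special T κ B hB𝒞.2 hsp)
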